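/- Under assumptions (U1)–(U2) of conditional uniformity, one has E[|n|·1_X] = (1/3)·E[((|I|²-1)/|I|)·1_X] where |I| = n⁺ - n⁻ + 1, and this equals (1/3)·E[(|I|+1)·1_X·1_{n≠0}]. -/

import Mathlib

open MeasureTheory

open scoped ENNReal

lemma icc_succ (b : ℤ) (hb : 0 ≤ b) :
    Finset.Icc (0:ℤ) (b+1) = insert (b+1) (Finset.Icc 0 b) := by
  ext x; simp only [Finset.mem_Icc, Finset.mem_insert]; omega

lemma gaussN (n : ℕ) : ∑ j ∈ Finset.Icc (0:ℤ) (n:ℤ), (j:ℝ) = n*(n+1)/2 := by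
  induction n with
  | zero => simp
  | succ m ih =>
    rw [show ((m+1:ℕ):ℤ) = (m:ℤ)+1 by push_cast; ring, icc_succ m (by positivity),
      Finset.sum_insert (by simp), ih]
    push_cast; ring

lemma gauss (b : ℤ) (hb : 0 ≤ b) : ∑ j ∈ Finset.Icc (0:ℤ) b, (j:ℝ) = b*(b+1)/2 := by
  obtain ⟨n, rfl⟩ := Int.eq_ofNat_of_zero_le hb
  rw [gaussN n]; push_cast; ring

lemma gauss2N (n : ℕ) : ∑ b ∈ Finset.Icc (0:ℤ) (n:ℤ), (b:ℝ)*((b:ℝ)+1) = n*(n+1)*(n+2)/3 := by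
  induction n with
  | zero => simp
  | succ m ih =>
    rw [show ((m+1:ℕ):ℤ) = (m:ℤ)+1 by push_cast; ring, icc_succ m (by positivity),
      Finset.sum_insert (by simp), ih]
    push_cast; ring

lemma gauss2 (k : ℤ) (hk : 0 ≤ k) :
    ∑ b ∈ Finset.Icc (0:ℤ) k, (b:ℝ)*((b:ℝ)+1) = k*(k+1)*(k+2)/3 := by
  obtain ⟨n, rfl⟩ := Int.eq_ofNat_of_zero_le hk
  rw [gauss2N n]; push_cast; ring

lemma reflect (k : ℤ) (f : ℤ → ℝ) :
    ∑ b ∈ Finset.Icc (0:ℤ) k, f b = ∑ b ∈ Finset.Icc (0:ℤ) k, f (k - b) := by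
  have e : Finset.Icc (0:ℤ) k = (Finset.Icc (0:ℤ) k).map
      ⟨fun b => k - b, show Function.Injective (fun b : ℤ => k - b) from fun x y h => by dsimp at h; omega⟩ := by
    ext x; simp only [Finset.mem_map, Finset.mem_Icc, Function.Embedding.coeFn_mk]
    constructor
    · rintro ⟨hx1, hx2⟩; exact ⟨k - x, ⟨by omega, by omega⟩, by omega⟩
    · rintro ⟨y, hy, rfl⟩; omega
  conv_rhs => rw [e, Finset.sum_map]
  apply Finset.sum_congr rfl
  intro x hx
  simp only [Function.Embedding.coeFn_mk]
  congr 1; ring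

lemma abs_sum (a b : ℤ) (ha : a ≤ 0) (hb : 0 ≤ b) :
    ∑ j ∈ Finset.Icc a b, |(j:ℝ)| =
      (∑ j ∈ Finset.Icc (0:ℤ) b, (j:ℝ)) + ∑ j ∈ Finset.Icc (0:ℤ) (-a), (j:ℝ) := by
  have hsplit : Finset.Icc a b = Finset.Ico a 0 ∪ Finset.Icc 0 b := by
    ext x; simp only [Finset.mem_Icc, Finset.mem_union, Finset.mem_Ico]; omega
  rw [hsplit, Finset.sum_union (by
    simp only [Finset.disjoint_left, Finset.mem_Ico, Finset.mem_Icc]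
    intro x hx hx2; omega)]
  have h1 : ∑ j ∈ Finset.Ico a (0:ℤ), |(j:ℝ)| = ∑ j ∈ Finset.Icc (0:ℤ) (-a), (j:ℝ) := by
    have e0 : Finset.Icc (0:ℤ) (-a) = insert 0 (Finset.Icc 1 (-a)) := by
      ext x; simp only [Finset.mem_Icc, Finset.mem_insert]; omega
    have e1 : Finset.Icc (1:ℤ) (-a) = (Finset.Ico a 0).map ⟨Neg.neg, neg_injective⟩ := by
      ext x
      simp only [Finset.mem_Icc, Finset.mem_map, Finset.mem_Ico, Function.Embedding.coeFn_mk]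
      constructor
      · rintro ⟨h1, h2⟩; exact ⟨-x, by omega, by omega⟩
      · rintro ⟨y, hy, rfl⟩; omega
    rw [e0, Finset.sum_insert (by simp), e1, Finset.sum_map]
    simp only [Function.Embedding.coeFn_mk, Int.cast_neg]
    rw [Int.cast_zero, zero_add]
    apply Finset.sum_congr rfl
    intro j hj
    simp only [Finset.mem_Ico] at hj
    rw [abs_of_nonpos (by exact_mod_cast hj.2.le)]
  have h2 : ∑ j ∈ Finset.Icc (0:ℤ) b, |(j:ℝ)| = ∑ j ∈ Finset.Icc (0:ℤ) b, (j:ℝ) := by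
    apply Finset.sum_congr rfl; intro j hj
    simp only [Finset.mem_Icc] at hj
    exact abs_of_nonneg (by exact_mod_cast hj.1)
  rw [h1, h2]; ring

lemma A1_val (k : ℤ) (hk : 0 ≤ k) :
    ∑ b ∈ Finset.Icc (0:ℤ) k, ∑ j ∈ Finset.Icc (b-k) b, |(j:ℝ)| = k*(k+1)*(k+2)/3 := by
  have h : ∀ b ∈ Finset.Icc (0:ℤ) k,
      ∑ j ∈ Finset.Icc (b-k) b, |(j:ℝ)| =
        (∑ j ∈ Finset.Icc (0:ℤ) b, (j:ℝ)) + ∑ j ∈ Finset.Icc (0:ℤ) (k-b), (j:ℝ) := by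
    intro b hb; simp only [Finset.mem_Icc] at hb
    rw [abs_sum _ _ (by omega) hb.1, show -(b-k) = k - b by ring]
  rw [Finset.sum_congr rfl h, Finset.sum_add_distrib]
  have hrefl := reflect k (fun b => ∑ j ∈ Finset.Icc (0:ℤ) (k-b), (j:ℝ))
  rw [hrefl]
  have e1 : ∀ b ∈ Finset.Icc (0:ℤ) k,
      (∑ j ∈ Finset.Icc (0:ℤ) (k - (k - b)), (j:ℝ)) = b*(b+1)/2 := by
    intro b hb; simp only [Finset.mem_Icc] at hb
    rw [show k - (k-b) = b by ring, gauss b hb.1]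
  rw [Finset.sum_congr rfl e1]
  have e2 : ∀ b ∈ Finset.Icc (0:ℤ) k, (∑ j ∈ Finset.Icc (0:ℤ) b, (j:ℝ)) = b*(b+1)/2 := by
    intro b hb; simp only [Finset.mem_Icc] at hb; exact gauss b hb.1
  rw [Finset.sum_congr rfl e2, ← Finset.sum_add_distrib]
  have e3 : ∀ b ∈ Finset.Icc (0:ℤ) k, ((b:ℝ)*(b+1)/2 + b*(b+1)/2) = b*(b+1) := by
    intro b _; ring
  rw [Finset.sum_congr rfl e3, gauss2 k hk]
open MeasureTheory
open scoped ENNReal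

lemma card_icc_real (a b : ℤ) (h : a ≤ b + 1) :
    ((Finset.Icc a b).card : ℝ) = (b:ℝ) - a + 1 := by
  have h2 : ((b + 1 - a).toNat : ℤ) = b + 1 - a := Int.toNat_of_nonneg (by omega)
  rw [Int.card_Icc]
  have h3 : (((b + 1 - a).toNat : ℕ) : ℝ) = (((b + 1 - a).toNat : ℤ) : ℝ) := by
    push_cast; ring
  rw [h3, h2]; push_cast; ring

lemma ind_sum (a b : ℤ) (ha : a ≤ 0) (hb : 0 ≤ b) :
    ∑ j ∈ Finset.Icc a b, (if j ≠ 0 then (1:ℝ) else 0) = (b:ℝ) - a := by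
  have e : ∀ j ∈ Finset.Icc a b,
      (if j ≠ 0 then (1:ℝ) else 0) = 1 - (if j = 0 then (1:ℝ) else 0) := by
    intro j _; by_cases h : j = 0 <;> simp [h]
  rw [Finset.sum_congr rfl e, Finset.sum_sub_distrib, Finset.sum_const,
    Finset.sum_ite_eq' (Finset.Icc a b) 0 (fun _ => (1:ℝ)),
    if_pos (by simp only [Finset.mem_Icc]; omega), nsmul_eq_mul, mul_one,
    card_icc_real a b (by omega)]
  ring

lemma key_lintegral {Ω : Type*} [MeasurableSpace Ω]
    (μ : Measure Ω) [IsProbabilityMeasure μ]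
    (X : Set Ω) (hX : MeasurableSet X)
    (np nm nn : Ω → ℤ) (hnp : Measurable np) (hnm : Measurable nm) (hnn : Measurable nn)
    (horder : ∀ ω, nm ω ≤ 0 ∧ 0 ≤ np ω)
    (hU1 : ∀ a b : ℤ, a ≤ 0 → 0 ≤ b → ∀ j ∈ Set.Icc a b,
      (μ (X ∩ {ω | np ω = b} ∩ {ω | nm ω = a} ∩ {ω | nn ω = j})).toReal
        = (μ (X ∩ {ω | np ω = b} ∩ {ω | nm ω = a})).toReal / ((b : ℝ) - (a : ℝ) + 1))
    (hU2 : ∀ k : ℤ, 0 ≤ k → ∀ j ∈ Set.Icc (0 : ℤ) k,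
      (μ (X ∩ {ω | np ω - nm ω = k} ∩ {ω | np ω = j})).toReal
        = (μ (X ∩ {ω | np ω - nm ω = k})).toReal / ((k : ℝ) + 1))
    (φ : ℤ → ℤ → ℤ → ℝ) (hφ : ∀ b a j, a ≤ 0 → 0 ≤ b → 0 ≤ φ b a j) :
    ∫⁻ ω in X, ENNReal.ofReal (φ (np ω) (nm ω) (nn ω)) ∂μ
      = ∑' k : ℤ, if 0 ≤ k then
          ENNReal.ofReal ((∑ b ∈ Finset.Icc 0 k, ∑ j ∈ Finset.Icc (b-k) b, φ b (b-k) j)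
            * ((μ (X ∩ {ω | np ω - nm ω = k})).toReal / ((k:ℝ)+1)^2)) else 0 := by
  classical
  have hF : Measurable (fun ω => (np ω, nm ω, nn ω) : Ω → ℤ × ℤ × ℤ) :=
    hnp.prodMk (hnm.prodMk hnn)
  have hSmeas : ∀ b a i : ℤ,
      MeasurableSet (X ∩ {ω | np ω = b} ∩ {ω | nm ω = a} ∩ {ω | nn ω = i}) :=
    fun b a i => ((hX.inter (hnp (measurableSet_singleton b))).inter
      (hnm (measurableSet_singleton a))).inter (hnn (measurableSet_singleton i))
  -- T is empty unless a ≤ 0 ≤ b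
  have hT0 : ∀ b a : ℤ, ¬(a ≤ 0 ∧ 0 ≤ b) →
      μ (X ∩ {ω | np ω = b} ∩ {ω | nm ω = a}) = 0 := by
    intro b a h
    have he : X ∩ {ω | np ω = b} ∩ {ω | nm ω = a} = ∅ := by
      ext ω
      constructor
      · rintro ⟨⟨-, h1⟩, h2⟩
        simp only [Set.mem_setOf_eq] at h1 h2
        exact absurd ⟨by rw [← h2]; exact (horder ω).1, by rw [← h1]; exact (horder ω).2⟩ h
      · intro h'; exact absurd h' (Set.notMem_empty ω)
    rw [he, measure_empty]
  -- disjointness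
  have hdisj : ∀ (b a : ℤ) (s : Finset ℤ), Set.PairwiseDisjoint (↑s)
      (fun i => X ∩ {ω | np ω = b} ∩ {ω | nm ω = a} ∩ {ω | nn ω = i}) := by
    intro b a s x _ y _ hxy
    refine Set.disjoint_left.mpr ?_
    rintro ω ⟨-, h1⟩ ⟨-, h2⟩
    simp only [Set.mem_setOf_eq] at h1 h2
    exact hxy (by omega)
  -- sum over the range equals the total
  have hsum : ∀ b a : ℤ, a ≤ 0 → 0 ≤ b →
      ∑ i ∈ Finset.Icc a b, μ (X ∩ {ω | np ω = b} ∩ {ω | nm ω = a} ∩ {ω | nn ω = i})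
        = μ (X ∩ {ω | np ω = b} ∩ {ω | nm ω = a}) := by
    intro b a ha hb
    have hd : (b:ℝ) - a + 1 ≠ 0 := by
      have : (a:ℝ) ≤ b := by exact_mod_cast le_trans ha hb
      linarith
    have h1 : (∑ i ∈ Finset.Icc a b,
        μ (X ∩ {ω | np ω = b} ∩ {ω | nm ω = a} ∩ {ω | nn ω = i})).toReal
          = (μ (X ∩ {ω | np ω = b} ∩ {ω | nm ω = a})).toReal := by
      rw [ENNReal.toReal_sum (fun i _ => measure_ne_top μ _)]
      rw [Finset.sum_congr rfl (fun i hi => by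
        simp only [Finset.mem_Icc] at hi
        exact hU1 a b ha hb i ⟨hi.1, hi.2⟩)]
      rw [Finset.sum_const, nsmul_eq_mul, card_icc_real a b (by omega)]
      field_simp
    have hfin : ∑ i ∈ Finset.Icc a b,
        μ (X ∩ {ω | np ω = b} ∩ {ω | nm ω = a} ∩ {ω | nn ω = i}) ≠ ∞ := by
      rw [← measure_biUnion_finset (hdisj b a _) (fun i _ => hSmeas b a i)]
      exact measure_ne_top μ _
    exact (ENNReal.toReal_eq_toReal_iff' hfin (measure_ne_top μ _)).mp h1
  -- zero outside the range
  have hS_zero : ∀ b a j : ℤ, a ≤ 0 → 0 ≤ b → j ∉ Finset.Icc a b →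
      μ (X ∩ {ω | np ω = b} ∩ {ω | nm ω = a} ∩ {ω | nn ω = j}) = 0 := by
    intro b a j ha hb hj
    have hunion := measure_biUnion_finset (μ := μ) (hdisj b a (insert j (Finset.Icc a b)))
      (fun i _ => hSmeas b a i)
    have hsub : (⋃ i ∈ insert j (Finset.Icc a b),
        X ∩ {ω | np ω = b} ∩ {ω | nm ω = a} ∩ {ω | nn ω = i})
          ⊆ X ∩ {ω | np ω = b} ∩ {ω | nm ω = a} :=
      Set.iUnion₂_subset (fun i _ => Set.inter_subset_left)
    have hle : ∑ i ∈ insert j (Finset.Icc a b),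
        μ (X ∩ {ω | np ω = b} ∩ {ω | nm ω = a} ∩ {ω | nn ω = i})
          ≤ μ (X ∩ {ω | np ω = b} ∩ {ω | nm ω = a}) := by
      rw [← hunion]; exact measure_mono hsub
    rw [Finset.sum_insert hj, hsum b a ha hb] at hle
    have hle2 : μ (X ∩ {ω | np ω = b} ∩ {ω | nm ω = a} ∩ {ω | nn ω = j})
        + μ (X ∩ {ω | np ω = b} ∩ {ω | nm ω = a})
        ≤ 0 + μ (X ∩ {ω | np ω = b} ∩ {ω | nm ω = a}) := by rwa [zero_add]
    exact le_antisymm (ENNReal.le_of_add_le_add_right (measure_ne_top μ _) hle2) zero_le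
  -- value inside the range
  have hS_val : ∀ b a j : ℤ, a ≤ 0 → 0 ≤ b → a ≤ j → j ≤ b →
      μ (X ∩ {ω | np ω = b} ∩ {ω | nm ω = a} ∩ {ω | nn ω = j})
        = ENNReal.ofReal
            ((μ (X ∩ {ω | np ω = b} ∩ {ω | nm ω = a})).toReal / ((b:ℝ) - (a:ℝ) + 1)) := by
    intro b a j ha hb hj1 hj2
    rw [← hU1 a b ha hb j ⟨hj1, hj2⟩, ENNReal.ofReal_toReal (measure_ne_top μ _)]
  -- the inner j-sum
  have hjsum : ∀ b a : ℤ, a ≤ 0 → 0 ≤ b →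
      ∑' j : ℤ, ENNReal.ofReal (φ b a j)
          * μ (X ∩ {ω | np ω = b} ∩ {ω | nm ω = a} ∩ {ω | nn ω = j})
        = ENNReal.ofReal ((∑ j ∈ Finset.Icc a b, φ b a j)
            * ((μ (X ∩ {ω | np ω = b} ∩ {ω | nm ω = a})).toReal / ((b:ℝ) - (a:ℝ) + 1))) := by
    intro b a ha hb
    have hd : (0:ℝ) ≤ (μ (X ∩ {ω | np ω = b} ∩ {ω | nm ω = a})).toReal
        / ((b:ℝ) - (a:ℝ) + 1) := by
      have : (a:ℝ) ≤ b := by exact_mod_cast le_trans ha hb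
      exact div_nonneg ENNReal.toReal_nonneg (by linarith)
    rw [tsum_eq_sum (s := Finset.Icc a b)
      (fun j hj => by rw [hS_zero b a j ha hb hj, mul_zero])]
    rw [Finset.sum_congr rfl (fun j hj => by
      simp only [Finset.mem_Icc] at hj
      rw [hS_val b a j ha hb hj.1 hj.2, ← ENNReal.ofReal_mul (hφ b a j ha hb)])]
    rw [← ENNReal.ofReal_sum_of_nonneg (fun j hj => mul_nonneg (hφ b a j ha hb) hd)]
    rw [← Finset.sum_mul]
  -- value of the two-index measure via hU2
  have hTval : ∀ k b : ℤ, 0 ≤ k → 0 ≤ b → b ≤ k →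
      (μ (X ∩ {ω | np ω = b} ∩ {ω | nm ω = b - k})).toReal
        = (μ (X ∩ {ω | np ω - nm ω = k})).toReal / ((k:ℝ)+1) := by
    intro k b hk hb hbk
    rw [show X ∩ {ω | np ω = b} ∩ {ω | nm ω = b - k}
        = X ∩ {ω | np ω - nm ω = k} ∩ {ω | np ω = b} from by
      ext ω
      simp only [Set.mem_inter_iff, Set.mem_setOf_eq]
      constructor
      · rintro ⟨⟨h1, h2⟩, h3⟩; exact ⟨⟨h1, by omega⟩, h2⟩
      · rintro ⟨⟨h1, h2⟩, h3⟩; exact ⟨⟨h1, h3⟩, by omega⟩]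
    exact hU2 k hk b ⟨hb, hbk⟩
  -- step 1 : lintegral as a triple tsum
  have step1 : ∫⁻ ω in X, ENNReal.ofReal (φ (np ω) (nm ω) (nn ω)) ∂μ
      = ∑' p : ℤ × ℤ × ℤ, ENNReal.ofReal (φ p.1 p.2.1 p.2.2)
          * μ (X ∩ {ω | np ω = p.1} ∩ {ω | nm ω = p.2.1} ∩ {ω | nn ω = p.2.2}) := by
    calc ∫⁻ ω in X, ENNReal.ofReal (φ (np ω) (nm ω) (nn ω)) ∂μ
        = ∫⁻ p, ENNReal.ofReal (φ p.1 p.2.1 p.2.2)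
            ∂((μ.restrict X).map (fun ω => (np ω, nm ω, nn ω))) :=
          (lintegral_map (f := fun p : ℤ × ℤ × ℤ => ENNReal.ofReal (φ p.1 p.2.1 p.2.2))
            (measurable_of_countable _) hF).symm
      _ = ∑' p : ℤ × ℤ × ℤ, ENNReal.ofReal (φ p.1 p.2.1 p.2.2)
            * ((μ.restrict X).map (fun ω => (np ω, nm ω, nn ω))) {p} :=
          lintegral_countable' _
      _ = ∑' p : ℤ × ℤ × ℤ, ENNReal.ofReal (φ p.1 p.2.1 p.2.2)
            * μ (X ∩ {ω | np ω = p.1} ∩ {ω | nm ω = p.2.1} ∩ {ω | nn ω = p.2.2}) := by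
          apply tsum_congr
          intro p
          congr 1
          rw [Measure.map_apply hF (measurableSet_singleton p),
            Measure.restrict_apply (hF (measurableSet_singleton p))]
          congr 1
          ext ω
          simp only [Set.mem_preimage, Set.mem_singleton_iff, Set.mem_inter_iff,
            Set.mem_setOf_eq, Prod.ext_iff]
          tauto
  have flat : ∑' p : ℤ × ℤ × ℤ, ENNReal.ofReal (φ p.1 p.2.1 p.2.2)
      * μ (X ∩ {ω | np ω = p.1} ∩ {ω | nm ω = p.2.1} ∩ {ω | nn ω = p.2.2})
      = ∑' (b : ℤ) (a : ℤ) (j : ℤ), ENNReal.ofReal (φ b a j)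
          * μ (X ∩ {ω | np ω = b} ∩ {ω | nm ω = a} ∩ {ω | nn ω = j}) :=
    calc ∑' p : ℤ × ℤ × ℤ, ENNReal.ofReal (φ p.1 p.2.1 p.2.2)
          * μ (X ∩ {ω | np ω = p.1} ∩ {ω | nm ω = p.2.1} ∩ {ω | nn ω = p.2.2})
        = ∑' (b : ℤ) (r : ℤ × ℤ), ENNReal.ofReal (φ b r.1 r.2)
            * μ (X ∩ {ω | np ω = b} ∩ {ω | nm ω = r.1} ∩ {ω | nn ω = r.2}) :=
          ENNReal.tsum_prod'
      _ = ∑' (b : ℤ) (a : ℤ) (j : ℤ), ENNReal.ofReal (φ b a j)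
            * μ (X ∩ {ω | np ω = b} ∩ {ω | nm ω = a} ∩ {ω | nn ω = j}) :=
          tsum_congr fun b => ENNReal.tsum_prod'
  have reindex : ∑' (b : ℤ) (a : ℤ) (j : ℤ), ENNReal.ofReal (φ b a j)
      * μ (X ∩ {ω | np ω = b} ∩ {ω | nm ω = a} ∩ {ω | nn ω = j})
      = ∑' (k : ℤ) (b : ℤ) (j : ℤ), ENNReal.ofReal (φ b (b - k) j)
          * μ (X ∩ {ω | np ω = b} ∩ {ω | nm ω = b - k} ∩ {ω | nn ω = j}) :=
    calc ∑' (b : ℤ) (a : ℤ) (j : ℤ), ENNReal.ofReal (φ b a j)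
          * μ (X ∩ {ω | np ω = b} ∩ {ω | nm ω = a} ∩ {ω | nn ω = j})
        = ∑' (b : ℤ) (k : ℤ) (j : ℤ), ENNReal.ofReal (φ b (b - k) j)
            * μ (X ∩ {ω | np ω = b} ∩ {ω | nm ω = b - k} ∩ {ω | nn ω = j}) :=
          tsum_congr fun b => ((Equiv.subLeft b).tsum_eq
            (fun a => ∑' (j : ℤ), ENNReal.ofReal (φ b a j)
              * μ (X ∩ {ω | np ω = b} ∩ {ω | nm ω = a} ∩ {ω | nn ω = j}))).symm
      _ = ∑' (k : ℤ) (b : ℤ) (j : ℤ), ENNReal.ofReal (φ b (b - k) j)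
            * μ (X ∩ {ω | np ω = b} ∩ {ω | nm ω = b - k} ∩ {ω | nn ω = j}) :=
          ENNReal.tsum_comm
  rw [step1, flat, reindex]
  apply tsum_congr
  intro k
  by_cases hk : 0 ≤ k
  · rw [if_pos hk]
    have hk0 : (0:ℝ) ≤ (k:ℝ) := by exact_mod_cast hk
    rw [tsum_eq_sum (s := Finset.Icc 0 k) (fun b hb => by
      refine ENNReal.tsum_eq_zero.mpr (fun j => ?_)
      have h0 : μ (X ∩ {ω | np ω = b} ∩ {ω | nm ω = b - k} ∩ {ω | nn ω = j}) = 0 := by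
        refine le_antisymm (le_trans (measure_mono Set.inter_subset_left)
          (le_of_eq (hT0 b (b-k) (by simp only [Finset.mem_Icc] at hb; omega)))) zero_le
      rw [h0, mul_zero])]
    rw [Finset.sum_congr rfl (fun b hb => by
      simp only [Finset.mem_Icc] at hb
      rw [hjsum b (b-k) (by omega) hb.1, hTval k b hk hb.1 hb.2,
        show ((b:ℝ) - ((b-k:ℤ):ℝ) + 1) = (k:ℝ)+1 from by push_cast; ring])]
    rw [← ENNReal.ofReal_sum_of_nonneg (fun b hb => by
      simp only [Finset.mem_Icc] at hb
      refine mul_nonneg (Finset.sum_nonneg (fun j _ => hφ b (b-k) j (by omega) hb.1)) ?_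
      refine div_nonneg (div_nonneg ENNReal.toReal_nonneg (by linarith)) (by linarith))]
    rw [← Finset.sum_mul, div_div, ← sq]
  · rw [if_neg hk]
    refine ENNReal.tsum_eq_zero.mpr (fun b => ENNReal.tsum_eq_zero.mpr (fun j => ?_))
    have h0 : μ (X ∩ {ω | np ω = b} ∩ {ω | nm ω = b - k} ∩ {ω | nn ω = j}) = 0 := by
      refine le_antisymm (le_trans (measure_mono Set.inter_subset_left)
        (le_of_eq (hT0 b (b-k) (by omega)))) zero_le
    rw [h0, mul_zero]

/-- Under the conditional uniformity assumptions (U1)-(U2), with `|I| = n⁺ - n⁻ + 1`,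
`E[|n| 1_X] = (1/3) E[((|I|²-1)/|I|) 1_X] = (1/3) E[(|I|+1) 1_X 1_{n≠0}]`. -/
theorem expectation_abs_n_identity {Ω : Type*} [MeasurableSpace Ω]
    (μ : Measure Ω) [IsProbabilityMeasure μ]
    (X : Set Ω) (hX : MeasurableSet X) (hXpos : 0 < μ X)
    (np nm nn : Ω → ℤ) (hnp : Measurable np) (hnm : Measurable nm) (hnn : Measurable nn)
    (horder : ∀ ω, nm ω ≤ 0 ∧ 0 ≤ np ω)
    (hU1 : ∀ a b : ℤ, a ≤ 0 → 0 ≤ b → ∀ j ∈ Set.Icc a b,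
      (μ (X ∩ {ω | np ω = b} ∩ {ω | nm ω = a} ∩ {ω | nn ω = j})).toReal
        = (μ (X ∩ {ω | np ω = b} ∩ {ω | nm ω = a})).toReal / ((b : ℝ) - (a : ℝ) + 1))
    (hU2 : ∀ k : ℤ, 0 ≤ k → ∀ j ∈ Set.Icc (0 : ℤ) k,
      (μ (X ∩ {ω | np ω - nm ω = k} ∩ {ω | np ω = j})).toReal
        = (μ (X ∩ {ω | np ω - nm ω = k})).toReal / ((k : ℝ) + 1))
    (hint1 : Integrable (fun ω => |(nn ω : ℝ)|) (μ.restrict X))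
    (hint2 : Integrable (fun ω =>
        ((((np ω : ℝ) - (nm ω : ℝ) + 1)) ^ 2 - 1) / ((np ω : ℝ) - (nm ω : ℝ) + 1))
      (μ.restrict X))
    (hint3 : Integrable (fun ω =>
        (((np ω : ℝ) - (nm ω : ℝ) + 1) + 1) * (if nn ω ≠ 0 then 1 else 0))
      (μ.restrict X)) :
    (∫ ω in X, |(nn ω : ℝ)| ∂μ
      = (1 / 3) * ∫ ω in X,
          ((((np ω : ℝ) - (nm ω : ℝ) + 1)) ^ 2 - 1) / ((np ω : ℝ) - (nm ω : ℝ) + 1) ∂μ) ∧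
    (∫ ω in X, |(nn ω : ℝ)| ∂μ
      = (1 / 3) * ∫ ω in X,
          (((np ω : ℝ) - (nm ω : ℝ) + 1) + 1) * (if nn ω ≠ 0 then 1 else 0) ∂μ) := by
  classical
  -- the master formula
  have key : ∀ φ : ℤ → ℤ → ℤ → ℝ, (∀ b a j, a ≤ 0 → 0 ≤ b → 0 ≤ φ b a j) →
      Integrable (fun ω => φ (np ω) (nm ω) (nn ω)) (μ.restrict X) →
      ∫ ω in X, φ (np ω) (nm ω) (nn ω) ∂μ
        = (∑' k : ℤ, if 0 ≤ k then
            ENNReal.ofReal ((∑ b ∈ Finset.Icc 0 k, ∑ j ∈ Finset.Icc (b-k) b, φ b (b-k) j)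
              * ((μ (X ∩ {ω | np ω - nm ω = k})).toReal / ((k:ℝ)+1)^2)) else 0).toReal := by
    intro φ hφ hint
    rw [integral_eq_lintegral_of_nonneg_ae
      (Filter.Eventually.of_forall (fun ω => hφ _ _ _ (horder ω).1 (horder ω).2))
      hint.aestronglyMeasurable]
    congr 1
    exact key_lintegral μ X hX np nm nn hnp hnm hnn horder hU1 hU2 φ hφ
  -- nonnegativity of the three integrands
  have hφ1 : ∀ b a j : ℤ, a ≤ 0 → 0 ≤ b → 0 ≤ |(j:ℝ)| := fun _ _ j _ _ => abs_nonneg _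
  have hφ2 : ∀ b a j : ℤ, a ≤ 0 → 0 ≤ b →
      0 ≤ (((b:ℝ) - (a:ℝ) + 1) ^ 2 - 1) / ((b:ℝ) - (a:ℝ) + 1) := by
    intro b a j ha hb
    have ha' : (a:ℝ) ≤ 0 := by exact_mod_cast ha
    have hb' : (0:ℝ) ≤ (b:ℝ) := by exact_mod_cast hb
    have h1 : (1:ℝ) ≤ (b:ℝ) - a + 1 := by linarith
    exact div_nonneg (by nlinarith) (by linarith)
  have hφ3 : ∀ b a j : ℤ, a ≤ 0 → 0 ≤ b →
      0 ≤ (((b:ℝ) - (a:ℝ) + 1) + 1) * (if j ≠ 0 then (1:ℝ) else 0) := by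
    intro b a j ha hb
    have ha' : (a:ℝ) ≤ 0 := by exact_mod_cast ha
    have hb' : (0:ℝ) ≤ (b:ℝ) := by exact_mod_cast hb
    have h2 : (0:ℝ) ≤ if j ≠ 0 then (1:ℝ) else 0 := by split <;> norm_num
    exact mul_nonneg (by linarith) h2
  -- applying the master formula
  have h1 : ∫ ω in X, |(nn ω : ℝ)| ∂μ
      = (∑' k : ℤ, if 0 ≤ k then
          ENNReal.ofReal ((∑ b ∈ Finset.Icc 0 k, ∑ j ∈ Finset.Icc (b-k) b, |(j:ℝ)|)
            * ((μ (X ∩ {ω | np ω - nm ω = k})).toReal / ((k:ℝ)+1)^2)) else 0).toReal :=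
    key (fun b a j => |(j:ℝ)|) hφ1 hint1
  have h2 : ∫ ω in X,
        ((((np ω : ℝ) - (nm ω : ℝ) + 1)) ^ 2 - 1) / ((np ω : ℝ) - (nm ω : ℝ) + 1) ∂μ
      = (∑' k : ℤ, if 0 ≤ k then
          ENNReal.ofReal ((∑ b ∈ Finset.Icc 0 k, ∑ j ∈ Finset.Icc (b-k) b,
              (((b:ℝ) - ((b-k:ℤ):ℝ) + 1) ^ 2 - 1) / ((b:ℝ) - ((b-k:ℤ):ℝ) + 1))
            * ((μ (X ∩ {ω | np ω - nm ω = k})).toReal / ((k:ℝ)+1)^2)) else 0).toReal :=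
    key (fun b a j => (((b:ℝ) - (a:ℝ) + 1) ^ 2 - 1) / ((b:ℝ) - (a:ℝ) + 1)) hφ2 hint2
  have h3 : ∫ ω in X,
        (((np ω : ℝ) - (nm ω : ℝ) + 1) + 1) * (if nn ω ≠ 0 then 1 else 0) ∂μ
      = (∑' k : ℤ, if 0 ≤ k then
          ENNReal.ofReal ((∑ b ∈ Finset.Icc 0 k, ∑ j ∈ Finset.Icc (b-k) b,
              (((b:ℝ) - ((b-k:ℤ):ℝ) + 1) + 1) * (if j ≠ 0 then (1:ℝ) else 0))
            * ((μ (X ∩ {ω | np ω - nm ω = k})).toReal / ((k:ℝ)+1)^2)) else 0).toReal :=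
    key (fun b a j => (((b:ℝ) - (a:ℝ) + 1) + 1) * (if j ≠ 0 then (1:ℝ) else 0)) hφ3 hint3
  -- evaluating the coefficient sums
  have e1 : ∀ k : ℤ, (if 0 ≤ k then
      ENNReal.ofReal ((∑ b ∈ Finset.Icc 0 k, ∑ j ∈ Finset.Icc (b-k) b, |(j:ℝ)|)
        * ((μ (X ∩ {ω | np ω - nm ω = k})).toReal / ((k:ℝ)+1)^2)) else 0)
      = (if 0 ≤ k then
          ENNReal.ofReal ((k:ℝ)*((k:ℝ)+1)*((k:ℝ)+2)/3
            * ((μ (X ∩ {ω | np ω - nm ω = k})).toReal / ((k:ℝ)+1)^2)) else 0) := by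
    intro k
    by_cases hk : 0 ≤ k
    · rw [if_pos hk, if_pos hk, A1_val k hk]
    · rw [if_neg hk, if_neg hk]
  have e2 : ∀ k : ℤ, (if 0 ≤ k then
      ENNReal.ofReal ((∑ b ∈ Finset.Icc 0 k, ∑ j ∈ Finset.Icc (b-k) b,
          (((b:ℝ) - ((b-k:ℤ):ℝ) + 1) ^ 2 - 1) / ((b:ℝ) - ((b-k:ℤ):ℝ) + 1))
        * ((μ (X ∩ {ω | np ω - nm ω = k})).toReal / ((k:ℝ)+1)^2)) else 0)
      = (if 0 ≤ k then
          ENNReal.ofReal ((k:ℝ)*((k:ℝ)+1)*((k:ℝ)+2)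
            * ((μ (X ∩ {ω | np ω - nm ω = k})).toReal / ((k:ℝ)+1)^2)) else 0) := by
    intro k
    by_cases hk : 0 ≤ k
    · rw [if_pos hk, if_pos hk]
      congr 1
      have hk0 : (0:ℝ) ≤ (k:ℝ) := by exact_mod_cast hk
      have hne : (k:ℝ) + 1 ≠ 0 := by linarith
      have hinner : ∀ b ∈ Finset.Icc (0:ℤ) k, (∑ j ∈ Finset.Icc (b-k) b,
          (((b:ℝ) - ((b-k:ℤ):ℝ) + 1) ^ 2 - 1) / ((b:ℝ) - ((b-k:ℤ):ℝ) + 1))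
            = ((k:ℝ)+1) * ((((k:ℝ)+1) ^ 2 - 1) / ((k:ℝ)+1)) := by
        intro b _
        rw [Finset.sum_const, nsmul_eq_mul, card_icc_real (b-k) b (by omega)]
        push_cast
        ring
      rw [Finset.sum_congr rfl hinner, Finset.sum_const, nsmul_eq_mul,
        card_icc_real 0 k (by omega),
        show ((k:ℝ)+1) * ((((k:ℝ)+1) ^ 2 - 1) / ((k:ℝ)+1)) = (((k:ℝ)+1)^2 - 1) from by
          field_simp]
      push_cast
      ring
    · rw [if_neg hk, if_neg hk]
  have e3 : ∀ k : ℤ, (if 0 ≤ k then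
      ENNReal.ofReal ((∑ b ∈ Finset.Icc 0 k, ∑ j ∈ Finset.Icc (b-k) b,
          (((b:ℝ) - ((b-k:ℤ):ℝ) + 1) + 1) * (if j ≠ 0 then (1:ℝ) else 0))
        * ((μ (X ∩ {ω | np ω - nm ω = k})).toReal / ((k:ℝ)+1)^2)) else 0)
      = (if 0 ≤ k then
          ENNReal.ofReal ((k:ℝ)*((k:ℝ)+1)*((k:ℝ)+2)
            * ((μ (X ∩ {ω | np ω - nm ω = k})).toReal / ((k:ℝ)+1)^2)) else 0) := by
    intro k
    by_cases hk : 0 ≤ k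
    · rw [if_pos hk, if_pos hk]
      congr 1
      have hinner : ∀ b ∈ Finset.Icc (0:ℤ) k, (∑ j ∈ Finset.Icc (b-k) b,
          (((b:ℝ) - ((b-k:ℤ):ℝ) + 1) + 1) * (if j ≠ 0 then (1:ℝ) else 0))
            = ((k:ℝ)+2) * (k:ℝ) := by
        intro b hb
        simp only [Finset.mem_Icc] at hb
        rw [← Finset.mul_sum, ind_sum (b-k) b (by omega) (by omega)]
        push_cast
        ring
      rw [Finset.sum_congr rfl hinner, Finset.sum_const, nsmul_eq_mul,
        card_icc_real 0 k (by omega)]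
      push_cast
      ring
    · rw [if_neg hk, if_neg hk]
  rw [tsum_congr e1] at h1
  rw [tsum_congr e2] at h2
  rw [tsum_congr e3] at h3
  -- the factor 3
  have H3 : (∑' k : ℤ, if 0 ≤ k then
      ENNReal.ofReal ((k:ℝ)*((k:ℝ)+1)*((k:ℝ)+2)
        * ((μ (X ∩ {ω | np ω - nm ω = k})).toReal / ((k:ℝ)+1)^2)) else 0)
      = 3 * (∑' k : ℤ, if 0 ≤ k then
          ENNReal.ofReal ((k:ℝ)*((k:ℝ)+1)*((k:ℝ)+2)/3
            * ((μ (X ∩ {ω | np ω - nm ω = k})).toReal / ((k:ℝ)+1)^2)) else 0) := by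
    rw [← ENNReal.tsum_mul_left]
    apply tsum_congr
    intro k
    by_cases hk : 0 ≤ k
    · rw [if_pos hk, if_pos hk,
        show (k:ℝ)*((k:ℝ)+1)*((k:ℝ)+2)
            * ((μ (X ∩ {ω | np ω - nm ω = k})).toReal / ((k:ℝ)+1)^2)
          = 3 * ((k:ℝ)*((k:ℝ)+1)*((k:ℝ)+2)/3
            * ((μ (X ∩ {ω | np ω - nm ω = k})).toReal / ((k:ℝ)+1)^2)) from by ring,
        ENNReal.ofReal_mul (by norm_num : (0:ℝ) ≤ 3)]
      norm_num
    · rw [if_neg hk, if_neg hk, mul_zero]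
  rw [H3] at h2 h3
  rw [h1, h2, h3]
  simp only [ENNReal.toReal_mul, ENNReal.toReal_ofNat]
  constructor <;> ring
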